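/- Let 0 < p ≤ 1/2 and suppose the inequality ‖σ_n^κ f‖_{H_p} ≤ c_p n^{1/p−2} log^{2[1/2+p]}(n+1) ‖f‖_{H_p} holds for all f ∈ H_p (where [·] is the integer part). If f ∈ H_p satisfies ω_{H_p}(1/2^k, f) = o(2^{−k(1/p−2)}) as k → ∞ (for p < 1/2), then ‖σ_n^κ f − f‖_{H_p} → 0 as n → ∞. -/

import Mathlib

open MeasureTheory Filter Finset
open scoped ENNReal NNReal

/-- The Walsh group `G = ∏ ℤ₂`. -/
abbrev WG := ℕ → ZMod 2

noncomputable section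

/-- The `k`-th Rademacher function `r_k(x) = (-1)^{x_k}`. -/
def rad (k : ℕ) (x : WG) : ℝ := (-1 : ℝ) ^ (x k).val

/-- The Walsh-Paley function `w_n(x) = (-1)^{∑ n_k x_k}`. -/
def walsh (n : ℕ) (x : WG) : ℝ :=
  (-1 : ℝ) ^ (∑ k ∈ Finset.range (n + 1), if n.testBit k then (x k).val else 0)

/-- The Walsh-Kaczmarz function
`κ_n(x) = r_{|n|}(x)·(-1)^{∑_{k<|n|} n_k x_{|n|-1-k}}`, `κ_0 = 1`,
where `|n| = Nat.log 2 n` is the position of the leading binary digit. -/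
def kacz (n : ℕ) (x : WG) : ℝ :=
  if n = 0 then 1 else
    rad (Nat.log 2 n) x *
      (-1 : ℝ) ^ (∑ k ∈ Finset.range (Nat.log 2 n),
        if n.testBit k then (x (Nat.log 2 n - 1 - k)).val else 0)

/-- Walsh-Paley Dirichlet kernel. -/
def Dw (n : ℕ) (x : WG) : ℝ := ∑ k ∈ Finset.range n, walsh k x

/-- Walsh-Kaczmarz Dirichlet kernel. -/
def Dk (n : ℕ) (x : WG) : ℝ := ∑ k ∈ Finset.range n, kacz k x

/-- Walsh-Fejér kernel `K_n = (1/n) ∑_{k=1}^n D_k`. -/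
def Kw (n : ℕ) (x : WG) : ℝ := (1 / n : ℝ) * ∑ k ∈ Finset.Icc 1 n, Dw k x

/-- The transformation reversing the first `A` coordinates. -/
def tau (A : ℕ) (x : WG) : WG := fun k => if k < A then x (A - 1 - k) else x k

/-- The dyadic interval (cylinder) `I_n(x)`. -/
def cyl (n : ℕ) (x : WG) : Set WG := {y | ∀ k < n, y k = x k}

/-- `I_n = I_n(0)`. -/
def In (n : ℕ) : Set WG := cyl n 0

/-- A measure `μ` on `WG` is the Haar (product) measure iff every cylinder of
level `n` has measure `2⁻ⁿ`. -/
def IsHaar (μ : Measure WG) : Prop :=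
  ∀ (n : ℕ) (x : WG), μ (cyl n x) = (2 : ℝ≥0∞)⁻¹ ^ n

/-- Walsh-Fourier coefficient. -/
def fhatW (μ : Measure WG) (f : WG → ℝ) (j : ℕ) : ℝ := ∫ x, f x * walsh j x ∂μ

/-- Walsh-Fourier partial sum `S_N f`. -/
def partialW (μ : Measure WG) (N : ℕ) (f : WG → ℝ) (x : WG) : ℝ :=
  ∑ j ∈ Finset.range N, fhatW μ f j * walsh j x

/-- Walsh-Kaczmarz-Fourier coefficient. -/
def fhatK (μ : Measure WG) (f : WG → ℝ) (j : ℕ) : ℝ := ∫ x, f x * kacz j x ∂μ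

/-- Walsh-Kaczmarz-Fourier partial sum `S_N^κ f`. -/
def partialK (μ : Measure WG) (N : ℕ) (f : WG → ℝ) (x : WG) : ℝ :=
  ∑ j ∈ Finset.range N, fhatK μ f j * kacz j x

/-- Walsh-Kaczmarz-Fejér mean `σ_n^κ f`. -/
def sigmaK (μ : Measure WG) (n : ℕ) (f : WG → ℝ) (x : WG) : ℝ :=
  (1 / n : ℝ) * ∑ j ∈ Finset.Icc 1 n, partialK μ j f x

end

noncomputable section

/-- The `H_p` quasi-norm of a dyadic martingale: `‖sup_n |f^{(n)}|‖_p`. -/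
noncomputable def HpNorm (μ : Measure WG) (p : ℝ) (f : ℕ → WG → ℝ) : ℝ≥0∞ :=
  (∫⁻ x, (⨆ n, (‖f n x‖₊ : ℝ≥0∞)) ^ p ∂μ) ^ (1 / p)

/-- `f = (f^{(n)})_n` is a dyadic martingale: each `f^{(n)}` is integrable and
`S_{2^m} f^{(n)} = f^{(m)}` for `m ≤ n` (this encodes both `F_m`-measurability
of `f^{(m)}` and the martingale property). -/
def IsDyadicMartingale (μ : Measure WG) (f : ℕ → WG → ℝ) : Prop :=
  (∀ n, Integrable (f n) μ) ∧ ∀ m n, m ≤ n → ∀ x, partialW μ (2 ^ m) (f n) x = f m x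

/-- The `H_p` modulus of continuity `ω_{H_p}(1/2^k, f) = ‖f − S_{2^k}f‖_{H_p}`,
using that the martingale `f − S_{2^k}f` is `(f^{(m)} − f^{(min m k)})_m`. -/
noncomputable def omegaHp (μ : Measure WG) (p : ℝ) (f : ℕ → WG → ℝ) (k : ℕ) : ℝ≥0∞ :=
  HpNorm μ p (fun m x => f m x - f (min m k) x)

/-- Walsh-Kaczmarz-Fourier coefficient of a martingale:
`f̂(i) = ∫ f^{(k)} κ_i dμ` for any `k` with `2^k > i`; we take `k = i+1`. -/
noncomputable def fhatKMart (μ : Measure WG) (f : ℕ → WG → ℝ) (i : ℕ) : ℝ :=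
  ∫ x, f (i + 1) x * kacz i x ∂μ

/-- The Walsh-Kaczmarz-Fejér mean `σ_n^κ f` of a martingale `f`. -/
noncomputable def sigmaKMart (μ : Measure WG) (n : ℕ) (f : ℕ → WG → ℝ) (x : WG) : ℝ :=
  (1 / n : ℝ) * ∑ j ∈ Finset.Icc 1 n, ∑ i ∈ Finset.range j, fhatKMart μ f i * kacz i x

/-- The `H_p` quasi-norm of an integrable function `g`, via its martingale
`(S_{2^m} g)_m`. -/
noncomputable def HpNormFn (μ : Measure WG) (p : ℝ) (g : WG → ℝ) : ℝ≥0∞ :=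
  HpNorm μ p (fun m => partialW μ (2 ^ m) g)

/-- `‖g − f‖_{H_p}` for a function `g` and a martingale `f`, via the martingale
`(S_{2^m}g − f^{(m)})_m`. -/
noncomputable def HpDist (μ : Measure WG) (p : ℝ) (g : WG → ℝ) (f : ℕ → WG → ℝ) : ℝ≥0∞ :=
  HpNorm μ p (fun m x => partialW μ (2 ^ m) g x - f m x)


/-- characters -/
def chr (N : ℕ) (ε : ℕ → Bool) (x : WG) : ℝ :=
  ∏ k ∈ Finset.range N, (if ε k then (-1:ℝ) ^ (x k).val else 1)

lemma chr_eq_pow (N : ℕ) (ε : ℕ → Bool) (x : WG) :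
    chr N ε x = (-1:ℝ) ^ (∑ k ∈ Finset.range N, if ε k then (x k).val else 0) := by
  rw [← Finset.prod_pow_eq_pow_sum]
  refine Finset.prod_congr rfl fun k _ => ?_
  split <;> simp

lemma measurable_chr (N : ℕ) (ε : ℕ → Bool) : Measurable (chr N ε) := by
  apply Finset.measurable_prod
  intro k _
  split
  · exact (measurable_of_finite (fun v : ZMod 2 => (-1:ℝ) ^ v.val)).comp (measurable_pi_apply k)
  · exact measurable_const

lemma abs_chr (N : ℕ) (ε : ℕ → Bool) (x : WG) : |chr N ε x| = 1 := by
  rw [chr, abs_prod]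
  refine Finset.prod_eq_one fun k _ => ?_
  split <;> simp [abs_pow]

lemma chr_mul (N : ℕ) (ε δ : ℕ → Bool) (x : WG) :
    chr N ε x * chr N δ x = chr N (fun k => xor (ε k) (δ k)) x := by
  rw [chr, chr, chr, ← Finset.prod_mul_distrib]
  refine Finset.prod_congr rfl fun k _ => ?_
  cases hε : ε k <;> cases hδ : δ k <;> simp [← mul_pow]

lemma chr_stable {N N' : ℕ} (h : N ≤ N') (ε : ℕ → Bool)
    (hε : ∀ k, N ≤ k → ε k = false) (x : WG) : chr N' ε x = chr N ε x := by
  rw [chr, chr]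
  symm
  refine Finset.prod_subset (Finset.range_subset_range.2 h) fun k hk hk2 => ?_
  simp only [Finset.mem_range] at hk hk2
  rw [hε k (le_of_not_gt hk2)]
  simp

section haar

variable {μ : Measure WG} (hμ : IsHaar μ)

lemma cyl_zero (x : WG) : cyl 0 x = Set.univ := by
  ext y; simp [cyl]

include hμ in
lemma isProb : IsProbabilityMeasure μ := by
  constructor
  rw [← cyl_zero 0, hμ 0 0, pow_zero]

lemma measurableSet_C (N : ℕ) (v : Fin N → ZMod 2) :
    MeasurableSet {y : WG | ∀ k : Fin N, y k = v k} := by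
  have : {y : WG | ∀ k : Fin N, y k = v k} = ⋂ k : Fin N, (fun y : WG => y k) ⁻¹' {v k} := by
    ext y; simp
  rw [this]
  exact MeasurableSet.iInter fun k => (measurable_pi_apply _) (measurableSet_singleton _)

include hμ in
lemma meas_C (N : ℕ) (v : Fin N → ZMod 2) :
    μ {y : WG | ∀ k : Fin N, y k = v k} = (2:ℝ≥0∞)⁻¹ ^ N := by
  have : {y : WG | ∀ k : Fin N, y k = v k}
      = cyl N (fun k => if h : k < N then v ⟨k, h⟩ else 0) := by
    ext y
    constructor
    · intro hy k hk
      simp only [dif_pos hk]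
      exact hy ⟨k, hk⟩
    · intro hy k
      have := hy k k.2
      simpa only [dif_pos k.2] using this
  rw [this, hμ]

include hμ in
/-- integral of a function of the first N coordinates -/
lemma integral_dep (N : ℕ) (H : (Fin N → ZMod 2) → ℝ) :
    ∫ x, H (fun k : Fin N => x k) ∂μ = (2:ℝ)⁻¹ ^ N * ∑ v : Fin N → ZMod 2, H v := by
  have key : (fun x : WG => H (fun k : Fin N => x k))
      = fun x => ∑ v : Fin N → ZMod 2,
          ({y : WG | ∀ k : Fin N, y k = v k}).indicator (fun _ => H v) x := by
    funext x
    rw [Finset.sum_eq_single (fun k : Fin N => x k)]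
    · simp [Set.indicator]
    · intro v _ hv
      rw [Set.indicator_of_notMem]
      intro hx
      exact hv (funext fun k => (hx k).symm)
    · intro h
      exact absurd (Finset.mem_univ _) h
  rw [key, integral_finset_sum]
  · have : ∀ v : Fin N → ZMod 2,
        ∫ x, ({y : WG | ∀ k : Fin N, y k = v k}).indicator (fun _ => H v) x ∂μ
          = (2:ℝ)⁻¹ ^ N * H v := by
      intro v
      rw [integral_indicator_const _ (measurableSet_C N v), measureReal_def, meas_C hμ, smul_eq_mul]
      congr 1
      simp [ENNReal.toReal_pow]
    simp_rw [this]
    rw [← Finset.mul_sum]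
  · intro v _
    rw [integrable_indicator_iff (measurableSet_C N v)]
    exact integrableOn_const (by rw [meas_C hμ]; exact ENNReal.pow_ne_top (by simp))

end haar

section haar2

variable {μ : Measure WG} (hμ : IsHaar μ)

include hμ in
lemma integral_chr (N : ℕ) (ε : ℕ → Bool) :
    ∫ x, chr N ε x ∂μ = if ∀ k < N, ε k = false then 1 else 0 := by
  have : (fun x : WG => chr N ε x)
      = fun x => (fun v : Fin N → ZMod 2 =>
          ∏ k : Fin N, (if ε k then (-1:ℝ) ^ (v k).val else 1)) (fun k : Fin N => x k) := by
    funext x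
    rw [chr, ← Fin.prod_univ_eq_prod_range (fun k => if ε k then (-1:ℝ) ^ (x k).val else 1) N]
  rw [this, integral_dep hμ N (fun v : Fin N → ZMod 2 =>
    ∏ k : Fin N, (if ε k then (-1:ℝ) ^ (v k).val else 1))]
  have swap : ∑ v : Fin N → ZMod 2, ∏ k : Fin N, (if ε k then (-1:ℝ) ^ (v k).val else 1)
      = ∏ k : Fin N, ∑ b : ZMod 2, (if ε k then (-1:ℝ) ^ b.val else 1) := by
    rw [Finset.prod_univ_sum, Fintype.piFinset_univ]
  rw [swap]
  have factor : ∀ k : ℕ, ∑ b : ZMod 2, (if ε k then (-1:ℝ) ^ b.val else 1)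
      = if ε k then 0 else 2 := by
    intro k
    cases h : ε k
    · simp [h]
    · have h2 : ∑ b : ZMod 2, ((-1:ℝ)) ^ (ZMod.val b) = ∑ b : Fin 2, ((-1:ℝ)) ^ (b.val) := rfl
      simp only [h, if_true]
      rw [h2, Fin.sum_univ_two]
      norm_num
  by_cases hall : ∀ k < N, ε k = false
  · rw [if_pos hall]
    have : ∀ k : Fin N, ∑ b : ZMod 2, (if ε k then (-1:ℝ) ^ b.val else 1) = 2 := by
      intro k
      rw [factor, if_neg]
      rw [hall k k.2]; simp
    rw [Finset.prod_congr rfl (fun k _ => this k), Finset.prod_const]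
    simp only [Finset.card_univ, Fintype.card_fin]
    rw [← mul_pow]
    norm_num
  · rw [if_neg hall]
    push_neg at hall
    obtain ⟨k, hk, hεk⟩ := hall
    rw [Finset.prod_eq_zero (Finset.mem_univ (⟨k, hk⟩ : Fin N))]
    · ring
    · rw [factor, if_pos (by simpa using hεk)]

lemma walsh_eq_chr (n : ℕ) (x : WG) : walsh n x = chr (n+1) n.testBit x := by
  rw [chr_eq_pow, walsh]

lemma testBit_high {n k : ℕ} (h : n < k) : n.testBit k = false :=
  Nat.testBit_lt_two_pow (lt_of_lt_of_le h (Nat.le_of_lt (Nat.lt_two_pow_self (n := k))))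

lemma walsh_eq_chr' {n N : ℕ} (h : n < N) (x : WG) : walsh n x = chr N n.testBit x := by
  rw [walsh_eq_chr, chr_stable h n.testBit (fun k hk => testBit_high (by omega)) x]

lemma measurable_walsh (n : ℕ) : Measurable (walsh n) := by
  have : walsh n = chr (n+1) n.testBit := funext fun x => walsh_eq_chr n x
  rw [this]; exact measurable_chr _ _

lemma abs_walsh (n : ℕ) (x : WG) : |walsh n x| = 1 := by
  rw [walsh_eq_chr]; exact abs_chr _ _ _

lemma walsh_mul (a b : ℕ) (x : WG) : walsh a x * walsh b x = walsh (a ^^^ b) x := by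
  set N := max (max a b) (a ^^^ b) + 1 with hN
  rw [walsh_eq_chr' (show a < N by omega) x, walsh_eq_chr' (show b < N by omega) x,
    walsh_eq_chr' (show a ^^^ b < N by omega) x, chr_mul]
  congr 1
  funext k
  exact (Nat.testBit_xor a b k).symm

include hμ in
lemma integral_walsh (n : ℕ) : ∫ x, walsh n x ∂μ = if n = 0 then 1 else 0 := by
  have : (fun x => walsh n x) = chr (n+1) n.testBit := funext fun x => walsh_eq_chr n x
  rw [this, integral_chr hμ]
  congr 1
  simp only [eq_iff_iff]
  constructor
  · intro h
    apply Nat.eq_of_testBit_eq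
    intro i
    simp only [Nat.zero_testBit]
    by_cases hi : i < n + 1
    · exact h i hi
    · exact testBit_high (by omega)
  · intro h; subst h; simp

include hμ in
lemma walsh_ortho (a b : ℕ) : ∫ x, walsh a x * walsh b x ∂μ = if a = b then 1 else 0 := by
  simp_rw [walsh_mul, integral_walsh hμ]
  congr 1
  simp only [eq_iff_iff]
  exact ⟨fun h => by have := congrArg (· ^^^ b) h; simpa [Nat.xor_assoc] using this,
    fun h => by subst h; simp⟩

include hμ in
lemma integrable_bdd_walsh {F : WG → ℝ} (hF : Integrable F μ) (j : ℕ) :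
    Integrable (fun x => F x * walsh j x) μ := by
  have := hF.bdd_mul (measurable_walsh j).aestronglyMeasurable
    (c := 1) (ae_of_all _ fun x => by rw [Real.norm_eq_abs, abs_walsh])
  simpa [mul_comm] using this

include hμ in
lemma integrable_walsh_mul_walsh (i j : ℕ) :
    Integrable (fun x => walsh i x * walsh j x) μ := by
  haveI := isProb hμ
  exact integrable_bdd_walsh hμ ((integrable_const (1:ℝ)).mono'
    (measurable_walsh i).aestronglyMeasurable
    (Filter.Eventually.of_forall fun x => by simp [Real.norm_eq_abs, abs_walsh])) j

end haar2

noncomputable section kaczidx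

/-- number with given low-order bits -/
def ofBits (N : ℕ) (ε : ℕ → Bool) : ℕ := ∑ j ∈ Finset.range N, if ε j then 2^j else 0

lemma ofBits_lt (N : ℕ) (ε : ℕ → Bool) : ofBits N ε < 2 ^ N := by
  induction N with
  | zero => simp [ofBits]
  | succ N ih =>
    rw [ofBits, Finset.sum_range_succ, ← ofBits]
    have : (if ε N then 2^N else 0) ≤ 2^N := by split <;> simp
    calc ofBits N ε + (if ε N then 2^N else 0) < 2^N + 2^N := by omega
    _ = 2^(N+1) := by ring

lemma testBit_ofBits (N : ℕ) (ε : ℕ → Bool) (j : ℕ) :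
    (ofBits N ε).testBit j = (decide (j < N) && ε j) := by
  induction N generalizing j with
  | zero => simp [ofBits]
  | succ N ih =>
    rw [ofBits, Finset.sum_range_succ, ← ofBits]
    cases h : ε N
    · rw [if_neg (by simp), add_zero]
      rcases lt_trichotomy j N with hj | hj | hj
      · rw [ih]; simp [hj, Nat.lt_succ_of_lt hj]
      · subst hj; rw [Nat.testBit_lt_two_pow (ofBits_lt j ε)]; simp [h]
      · rw [Nat.testBit_lt_two_pow
          (lt_of_lt_of_le (ofBits_lt N ε) (Nat.pow_le_pow_right (by norm_num) (by omega)))]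
        simp; omega
    · rw [if_pos rfl, add_comm]
      rcases lt_trichotomy j N with hj | hj | hj
      · rw [Nat.testBit_two_pow_add_gt hj, ih]; simp [hj, Nat.lt_succ_of_lt hj]
      · subst hj; rw [Nat.testBit_two_pow_add_eq, Nat.testBit_lt_two_pow (ofBits_lt j ε)]
        simp [h]
      · have hfin : 2^N + ofBits N ε < 2^j := by
          have h1 := ofBits_lt N ε
          have h3 : 2^(N+1) ≤ 2^j := Nat.pow_le_pow_right (by norm_num) hj
          have : (2:ℕ)^(N+1) = 2^N + 2^N := by ring
          omega
        rw [Nat.testBit_lt_two_pow hfin]; simp; omega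

/-- the bit pattern of the Walsh index of the Kaczmarz function κ_n -/
def kbits (n : ℕ) (j : ℕ) : Bool :=
  if j = Nat.log 2 n then (n != 0)
  else if j < Nat.log 2 n then n.testBit (Nat.log 2 n - 1 - j) else false

/-- the Walsh index of κ_n -/
def kidx (n : ℕ) : ℕ := ofBits (Nat.log 2 n + 1) (kbits n)

lemma kbits_high {n j : ℕ} (h : Nat.log 2 n < j) : kbits n j = false := by
  rw [kbits, if_neg (by omega), if_neg (by omega)]

lemma testBit_kidx (n : ℕ) (j : ℕ) : (kidx n).testBit j = kbits n j := by
  rw [kidx, testBit_ofBits]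
  by_cases h : j < Nat.log 2 n + 1
  · simp [h]
  · rw [kbits_high (by omega)]
    simp [h]

lemma kidx_zero : kidx 0 = 0 := by
  apply Nat.eq_of_testBit_eq
  intro i
  rw [testBit_kidx, kbits]
  simp

lemma kidx_mem_block {n : ℕ} (hn : n ≠ 0) :
    2 ^ Nat.log 2 n ≤ kidx n ∧ kidx n < 2 ^ (Nat.log 2 n + 1) := by
  constructor
  · have h : (kidx n).testBit (Nat.log 2 n) = true := by
      rw [testBit_kidx, kbits, if_pos rfl]
      simpa using hn
    by_contra hlt
    rw [Nat.testBit_lt_two_pow (by omega)] at h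
    exact Bool.false_ne_true h
  · exact ofBits_lt _ _

lemma log_kidx {n : ℕ} (hn : n ≠ 0) : Nat.log 2 (kidx n) = Nat.log 2 n :=
  Nat.log_eq_of_pow_le_of_lt_pow (kidx_mem_block hn).1 (kidx_mem_block hn).2

lemma testBit_log_self {n : ℕ} (hn : n ≠ 0) : n.testBit (Nat.log 2 n) = true := by
  rw [Nat.testBit_eq_decide_div_mod_eq]
  have h1 := Nat.pow_log_le_self 2 hn
  have h2 := Nat.lt_pow_succ_log_self (by norm_num : 1 < 2) n
  have hp : 0 < 2 ^ Nat.log 2 n := pow_pos (by norm_num) _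
  have : n / 2 ^ Nat.log 2 n = 1 := by
    have l1 : 1 ≤ n / 2 ^ Nat.log 2 n := by
      rw [Nat.le_div_iff_mul_le hp]; simpa using h1
    have l2 : n / 2 ^ Nat.log 2 n < 2 := by
      rw [Nat.div_lt_iff_lt_mul hp]
      rw [pow_succ] at h2
      omega
    omega
  simp [this]

lemma kidx_inj : Function.Injective kidx := by
  intro m n h
  by_cases hm : m = 0
  · subst hm
    rw [kidx_zero] at h
    by_contra hn
    have := (kidx_mem_block (Ne.symm hn)).1
    have : 0 < kidx n := lt_of_lt_of_le (pow_pos (by norm_num) _) this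
    omega
  by_cases hn : n = 0
  · subst hn
    rw [kidx_zero] at h
    have := (kidx_mem_block hm).1
    have : 0 < kidx m := lt_of_lt_of_le (pow_pos (by norm_num) _) this
    omega
  have hlog : Nat.log 2 m = Nat.log 2 n := by
    rw [← log_kidx hm, ← log_kidx hn, h]
  set A := Nat.log 2 m with hA
  apply Nat.eq_of_testBit_eq
  intro i
  rcases lt_trichotomy i A with hi | hi | hi
  · have h1 : kbits m (A - 1 - i) = kbits n (A - 1 - i) := by
      rw [← testBit_kidx, ← testBit_kidx, h]
    have e1 : A - 1 - i ≠ A := by omega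
    have e2 : A - 1 - i < A := by omega
    have e3 : A - 1 - (A - 1 - i) = i := by omega
    rw [kbits, kbits, ← hlog, if_neg e1, if_neg e1, if_pos e2, if_pos e2, e3] at h1
    exact h1
  · subst hi
    rw [testBit_log_self hm, hlog, testBit_log_self hn]
  · have hpow : ∀ t : ℕ, Nat.log 2 t = A → t < 2 ^ i := by
      intro t ht
      calc t < 2 ^ (Nat.log 2 t + 1) := Nat.lt_pow_succ_log_self (by norm_num) t
        _ ≤ 2 ^ i := by
          apply Nat.pow_le_pow_right (by norm_num)
          omega
    rw [Nat.testBit_lt_two_pow (hpow m hA.symm), Nat.testBit_lt_two_pow (hpow n hlog.symm)]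

end kaczidx

section kaczwalsh

lemma kacz_eq_chr (n : ℕ) (x : WG) : kacz n x = chr (Nat.log 2 n + 1) (kbits n) x := by
  by_cases hn : n = 0
  · subst hn
    simp [kacz, chr, kbits]
  · set A := Nat.log 2 n with hA
    rw [chr, Finset.prod_range_succ, ← chr]
    have hbit : kbits n A = true := by rw [kbits, if_pos rfl]; simpa using hn
    rw [hbit, if_pos rfl]
    rw [kacz, if_neg hn, mul_comm, rad]
    congr 1
    rw [chr_eq_pow]
    congr 1
    refine Finset.sum_nbij' (fun k => A - 1 - k) (fun k => A - 1 - k) ?_ ?_ ?_ ?_ ?_ <;>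
      intro k hk <;> simp only [Finset.mem_range] at hk ⊢
    · omega
    · omega
    · omega
    · omega
    · have e : kbits n (A - 1 - k) = n.testBit k := by
        rw [kbits, ← hA, if_neg (by omega), if_pos (by omega)]
        congr 1
        omega
      rw [e]

lemma kacz_eq_walsh (n : ℕ) : kacz n = walsh (kidx n) := by
  funext x
  set A := Nat.log 2 n with hA
  have h1 : kidx n < 2 ^ (A + 1) := ofBits_lt _ _
  have h2 : A + 1 ≤ 2 ^ (A + 1) := Nat.le_of_lt Nat.lt_two_pow_self
  rw [kacz_eq_chr, walsh_eq_chr' h1 x]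
  have e : (kidx n).testBit = kbits n := funext fun j => testBit_kidx n j
  rw [e, chr_stable h2 (kbits n) (fun k hk => kbits_high (by omega)) x]

lemma abs_kacz (n : ℕ) (x : WG) : |kacz n x| = 1 := by
  rw [kacz_eq_walsh]; exact abs_walsh _ _

lemma measurable_kacz (n : ℕ) : Measurable (kacz n) := by
  rw [kacz_eq_walsh]; exact measurable_walsh _

lemma kidx_lt_iff (i m : ℕ) : kidx i < 2 ^ m ↔ i < 2 ^ m := by
  by_cases hi : i = 0
  · subst hi
    rw [kidx_zero]
  · set A := Nat.log 2 i with hA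
    have hb := kidx_mem_block hi
    have hia : 2 ^ A ≤ i := Nat.pow_log_le_self 2 hi
    have hia2 : i < 2 ^ (A + 1) := Nat.lt_pow_succ_log_self (by norm_num) i
    constructor
    · intro h
      have : (2:ℕ) ^ A < 2 ^ m := lt_of_le_of_lt hb.1 h
      have hAm : A < m := by
        exact (Nat.pow_lt_pow_iff_right (by norm_num)).1 this
      exact lt_of_lt_of_le hia2 (Nat.pow_le_pow_right (by norm_num) hAm)
    · intro h
      have : (2:ℕ) ^ A < 2 ^ m := lt_of_le_of_lt hia h
      have hAm : A < m := by
        exact (Nat.pow_lt_pow_iff_right (by norm_num)).1 this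
      exact lt_of_lt_of_le hb.2 (Nat.pow_le_pow_right (by norm_num) hAm)

lemma kidx_lt_two_pow_succ (i : ℕ) : kidx i < 2 ^ (i + 1) := by
  by_cases hi : i = 0
  · subst hi; rw [kidx_zero]; simp [pow_pos]
  · exact lt_of_lt_of_le (kidx_mem_block hi).2
      (Nat.pow_le_pow_right (by norm_num) (by
        have := Nat.log_le_self 2 i
        omega))

lemma kidx_image (m : ℕ) :
    Finset.image kidx (Finset.range (2 ^ m)) = Finset.range (2 ^ m) := by
  apply Finset.eq_of_subset_of_card_le
  · intro j hj
    simp only [Finset.mem_image, Finset.mem_range] at hj ⊢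
    obtain ⟨i, hi, rfl⟩ := hj
    exact (kidx_lt_iff i m).2 hi
  · rw [Finset.card_image_of_injective _ kidx_inj]

lemma sum_kidx_reindex (m : ℕ) (φ : ℕ → ℝ) :
    ∑ i ∈ Finset.range (2 ^ m), φ (kidx i) = ∑ j ∈ Finset.range (2 ^ m), φ j := by
  conv_rhs => rw [← kidx_image m]
  rw [Finset.sum_image (fun a _ b _ h => kidx_inj h)]

end kaczwalsh

section partialWlemmas

variable {μ : Measure WG} (hμ : IsHaar μ)

include hμ in
lemma integrable_walsh (n : ℕ) : Integrable (walsh n) μ := by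
  haveI := isProb hμ
  exact (integrable_const (1:ℝ)).mono' (measurable_walsh n).aestronglyMeasurable
    (Filter.Eventually.of_forall fun x => by simp [Real.norm_eq_abs, abs_walsh])

include hμ in
lemma integrable_kacz (n : ℕ) : Integrable (kacz n) μ := by
  rw [kacz_eq_walsh]; exact integrable_walsh hμ _

include hμ in
lemma fhatW_poly (s : Finset ℕ) (c : ℕ → ℝ) (j : ℕ) :
    fhatW μ (fun x => ∑ i ∈ s, c i * walsh i x) j = if j ∈ s then c j else 0 := by
  rw [fhatW]
  have : ∀ x : WG, (∑ i ∈ s, c i * walsh i x) * walsh j x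
      = ∑ i ∈ s, c i * (walsh i x * walsh j x) := by
    intro x
    rw [Finset.sum_mul]
    exact Finset.sum_congr rfl fun i _ => by ring
  simp_rw [this]
  rw [integral_finset_sum]
  · have h1 : ∀ i ∈ s, ∫ x, c i * (walsh i x * walsh j x) ∂μ
        = if i = j then c i else 0 := by
      intro i _
      rw [MeasureTheory.integral_const_mul, walsh_ortho hμ]
      split <;> simp
    rw [Finset.sum_congr rfl h1, Finset.sum_ite_eq' s j c]
  · intro i _
    exact (integrable_walsh_mul_walsh hμ i j).const_mul _

lemma filter_range_lt (M N : ℕ) :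
    (Finset.range M).filter (· < N) = Finset.range (min M N) := by
  ext j; simp only [Finset.mem_filter, Finset.mem_range]; omega

include hμ in
lemma partialW_poly (N : ℕ) (s : Finset ℕ) (c : ℕ → ℝ) :
    partialW μ N (fun x => ∑ i ∈ s, c i * walsh i x)
      = fun x => ∑ i ∈ s.filter (· < N), c i * walsh i x := by
  funext x
  rw [partialW]
  simp_rw [fhatW_poly hμ s c]
  rw [Finset.sum_congr rfl (fun j _ => by rw [ite_mul, zero_mul])]
  rw [← Finset.sum_filter]
  congr 1
  ext j
  simp only [Finset.mem_filter, Finset.mem_range]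
  tauto

end partialWlemmas

section partialW2

variable {μ : Measure WG} (hμ : IsHaar μ)

include hμ in
lemma partialW_sum (N : ℕ) (s : Finset ℕ) (g : ℕ → WG → ℝ)
    (hg : ∀ i ∈ s, Integrable (g i) μ) (x : WG) :
    partialW μ N (fun x => ∑ i ∈ s, g i x) x = ∑ i ∈ s, partialW μ N (g i) x := by
  have hco : ∀ j, fhatW μ (fun x => ∑ i ∈ s, g i x) j = ∑ i ∈ s, fhatW μ (g i) j := by
    intro j
    rw [fhatW]
    simp_rw [Finset.sum_mul]
    rw [integral_finset_sum]
    · rfl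
    · exact fun i hi => integrable_bdd_walsh hμ (hg i hi) j
  rw [partialW]
  simp_rw [hco, Finset.sum_mul]
  rw [Finset.sum_comm]
  rfl

lemma partialW_const_mul (N : ℕ) (c : ℝ) (g : WG → ℝ) (x : WG) :
    partialW μ N (fun x => c * g x) x = c * partialW μ N g x := by
  have hco : ∀ j, fhatW μ (fun x => c * g x) j = c * fhatW μ g j := by
    intro j
    rw [fhatW, fhatW, ← MeasureTheory.integral_const_mul]
    congr 1; funext y; ring
  rw [partialW, partialW, Finset.mul_sum]
  exact Finset.sum_congr rfl fun j _ => by rw [hco]; ring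

include hμ in
lemma partialW_sub (N : ℕ) {F G : WG → ℝ} (hF : Integrable F μ) (hG : Integrable G μ) (x : WG) :
    partialW μ N (fun x => F x - G x) x = partialW μ N F x - partialW μ N G x := by
  have hco : ∀ j, fhatW μ (fun x => F x - G x) j = fhatW μ F j - fhatW μ G j := by
    intro j
    rw [fhatW, fhatW, fhatW, ← integral_sub (integrable_bdd_walsh hμ hF j)
      (integrable_bdd_walsh hμ hG j)]
    congr 1; funext y; ring
  rw [partialW, partialW, partialW, ← Finset.sum_sub_distrib]
  exact Finset.sum_congr rfl fun j _ => by rw [hco]; ring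

include hμ in
lemma partialW_walsh (N e : ℕ) :
    partialW μ N (walsh e) = fun x => if e < N then walsh e x else 0 := by
  have h : walsh e = fun x => ∑ i ∈ ({e} : Finset ℕ), (1:ℝ) * walsh i x := by
    funext x; simp
  rw [h, partialW_poly hμ N {e} (fun _ => 1)]
  funext x
  rw [Finset.filter_singleton]
  split <;> simp

include hμ in
lemma partialW_kacz (m i : ℕ) :
    partialW μ (2^m) (kacz i) = fun x => if i < 2^m then kacz i x else 0 := by
  rw [kacz_eq_walsh, partialW_walsh hμ]
  funext x
  by_cases h : i < 2^m
  · rw [if_pos h, if_pos ((kidx_lt_iff i m).2 h)]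
  · rw [if_neg h, if_neg (fun hh => h ((kidx_lt_iff i m).1 hh))]

include hμ in
lemma fhatW_partialW (F : WG → ℝ) (N j : ℕ) :
    fhatW μ (partialW μ N F) j = if j < N then fhatW μ F j else 0 := by
  have : partialW μ N F = fun x => ∑ i ∈ Finset.range N, fhatW μ F i * walsh i x := rfl
  rw [this, fhatW_poly hμ]
  simp

include hμ in
lemma partialW_partialW (M N : ℕ) (F : WG → ℝ) (x : WG) :
    partialW μ M (partialW μ N F) x = partialW μ (min M N) F x := by
  rw [partialW]
  simp_rw [fhatW_partialW hμ F N]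
  rw [Finset.sum_congr rfl (fun j _ => by rw [ite_mul, zero_mul]),
    ← Finset.sum_filter, filter_range_lt]
  rfl

/-- the σ means as explicit Kaczmarz polynomials -/
lemma sum_Icc_sum (n : ℕ) (t : ℕ → ℝ) :
    ∑ j ∈ Finset.Icc 1 n, ∑ i ∈ Finset.range j, t i
      = ∑ i ∈ Finset.range n, ((n - i : ℕ) : ℝ) * t i := by
  induction n with
  | zero => simp
  | succ n ih =>
    rw [Finset.sum_Icc_succ_top (by omega : 1 ≤ n + 1), ih, Finset.sum_range_succ,
      Finset.sum_range_succ (fun i => ((n + 1 - i : ℕ) : ℝ) * t i)]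
    have h1 : ∀ i ∈ Finset.range n, ((n + 1 - i : ℕ) : ℝ) * t i
        = ((n - i : ℕ) : ℝ) * t i + t i := by
      intro i hi
      simp only [Finset.mem_range] at hi
      have : (n + 1 - i : ℕ) = (n - i) + 1 := by omega
      rw [this]
      push_cast
      ring
    rw [Finset.sum_congr rfl h1, Finset.sum_add_distrib]
    have : (n + 1 - n : ℕ) = 1 := by omega
    rw [this]
    push_cast
    ring

lemma sigma_eq_poly (n : ℕ) (F : ℕ → WG → ℝ) (x : WG) :
    sigmaKMart μ n F x
      = (1 / n : ℝ) * ∑ i ∈ Finset.range n, ((n - i : ℕ) : ℝ) * (fhatKMart μ F i * kacz i x) := by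
  rw [sigmaKMart, sum_Icc_sum n (fun i => fhatKMart μ F i * kacz i x)]

include hμ in
/-- KEY1 -/
lemma partialW_sigma (n m : ℕ) (F : ℕ → WG → ℝ) (x : WG) :
    partialW μ (2^m) (sigmaKMart μ n F) x
      = (1 / n : ℝ) * ∑ i ∈ Finset.range (min n (2^m)),
          ((n - i : ℕ) : ℝ) * (fhatKMart μ F i * kacz i x) := by
  have h0 : sigmaKMart μ n F = fun x => (1 / n : ℝ) * ∑ i ∈ Finset.range n,
      (((n - i : ℕ) : ℝ) * fhatKMart μ F i) * kacz i x := by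
    funext y
    rw [sigma_eq_poly]
    congr 1
    exact Finset.sum_congr rfl fun i _ => by ring
  rw [h0, partialW_const_mul,
    partialW_sum hμ _ _ _ (fun i _ => (integrable_kacz hμ i).const_mul _) x]
  congr 1
  have h1 : ∀ i ∈ Finset.range n,
      partialW μ (2^m) (fun y => (((n - i : ℕ) : ℝ) * fhatKMart μ F i) * kacz i y) x
        = if i < 2^m then ((n - i : ℕ) : ℝ) * (fhatKMart μ F i * kacz i x) else 0 := by
    intro i _
    rw [partialW_const_mul, partialW_kacz hμ m i]
    split <;> ring
  rw [Finset.sum_congr rfl h1, ← Finset.sum_filter, filter_range_lt]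

end partialW2

section martingale

variable {μ' : Measure WG}

lemma integrable_bdd_kacz (hμ : IsHaar μ') {F : WG → ℝ} (hF : Integrable F μ') (j : ℕ) :
    Integrable (fun x => F x * kacz j x) μ' := by
  simp_rw [kacz_eq_walsh]
  exact integrable_bdd_walsh hμ hF _


variable {μ : Measure WG} (hμ : IsHaar μ) {f : ℕ → WG → ℝ} (hf : IsDyadicMartingale μ f)

include hμ hf in
lemma integral_mart_walsh {k K e : ℕ} (hkK : k ≤ K) (he : e < 2^k) :
    ∫ x, f k x * walsh e x ∂μ = fhatW μ (f K) e := by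
  have h1 : f k = partialW μ (2^k) (f K) := by
    funext y
    exact (hf.2 k K hkK y).symm
  rw [h1]
  have h2 : (fun x => partialW μ (2^k) (f K) x * walsh e x) =
      fun x => (∑ i ∈ Finset.range (2^k), fhatW μ (f K) i * walsh i x) * walsh e x := rfl
  calc ∫ x, partialW μ (2^k) (f K) x * walsh e x ∂μ
      = fhatW μ (partialW μ (2^k) (f K)) e := rfl
    _ = fhatW μ (f K) e := by rw [fhatW_partialW hμ, if_pos he]

include hμ hf in
/-- M2 : stability of Kaczmarz coefficients -/
lemma coeffK {i k : ℕ} (h : kidx i < 2^k) :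
    ∫ x, f k x * kacz i x ∂μ = fhatKMart μ f i := by
  set K := max k (i+1) with hK
  have e1 : ∫ x, f k x * kacz i x ∂μ = fhatW μ (f K) (kidx i) := by
    rw [kacz_eq_walsh]
    exact integral_mart_walsh hμ hf (le_max_left _ _) h
  have e2 : fhatKMart μ f i = fhatW μ (f K) (kidx i) := by
    rw [fhatKMart]
    simp_rw [kacz_eq_walsh]
    exact integral_mart_walsh hμ hf (le_max_right _ _) (kidx_lt_two_pow_succ i)
  rw [e1, e2]

include hμ hf in
/-- M3 : the martingale levels as Kaczmarz polynomials -/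
lemma mart_eq_kacz_poly (m : ℕ) (x : WG) :
    f m x = ∑ i ∈ Finset.range (2^m), fhatKMart μ f i * kacz i x := by
  have h1 : ∀ i ∈ Finset.range (2^m), fhatKMart μ f i * kacz i x
      = (fun j => fhatW μ (f m) j * walsh j x) (kidx i) := by
    intro i hi
    simp only [Finset.mem_range] at hi
    have hki : kidx i < 2^m := (kidx_lt_iff i m).2 hi
    have : fhatKMart μ f i = fhatW μ (f m) (kidx i) := by
      rw [← coeffK hμ hf hki, kacz_eq_walsh]
      exact integral_mart_walsh hμ hf le_rfl hki
    rw [this, kacz_eq_walsh]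
  rw [Finset.sum_congr rfl h1, sum_kidx_reindex m (fun j => fhatW μ (f m) j * walsh j x)]
  exact (hf.2 m m le_rfl x).symm

include hμ hf in
lemma partialW_high {k m : ℕ} (h : k ≤ m) (x : WG) :
    partialW μ (2^m) (f k) x = f k x := by
  have h1 : f k = partialW μ (2^k) (f k) := by
    funext y; exact (hf.2 k k le_rfl y).symm
  conv_lhs => rw [h1]
  rw [partialW_partialW hμ]
  have : min (2^m) (2^k) = 2^k :=
    min_eq_right (Nat.pow_le_pow_right (by norm_num) h)
  rw [this, ← h1]

include hμ hf in
/-- the tail martingale f - S_{2^k} f -/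
lemma tail_martingale (k : ℕ) :
    IsDyadicMartingale μ (fun m x => f m x - f (min m k) x) := by
  constructor
  · exact fun m => (hf.1 m).sub (hf.1 _)
  · intro m n hmn x
    rw [partialW_sub hμ (2^m) (hf.1 n) (hf.1 _) x, hf.2 m n hmn x]
    congr 1
    by_cases hmk : m ≤ k
    · have h2 : min m k = m := min_eq_left hmk
      rw [h2]
      exact hf.2 m (min n k) (le_min hmn hmk) x
    · push_neg at hmk
      have h1 : min n k = k := min_eq_right (by omega)
      have h2 : min m k = k := min_eq_right (by omega)
      rw [h1, h2]
      exact partialW_high hμ hf (by omega) x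

include hμ hf in
/-- P6 : Kaczmarz coefficients of the tail martingale -/
lemma tail_coeff (k i : ℕ) :
    fhatKMart μ (fun m x => f m x - f (min m k) x) i
      = if i < 2^k then 0 else fhatKMart μ f i := by
  have hsplit : fhatKMart μ (fun m x => f m x - f (min m k) x) i
      = fhatKMart μ f i - ∫ x, f (min (i+1) k) x * kacz i x ∂μ := by
    rw [fhatKMart, fhatKMart, ← integral_sub (integrable_bdd_kacz hμ (hf.1 (i+1)) i)
      (integrable_bdd_kacz hμ (hf.1 _) i)]
    congr 1; funext y; ring
  rw [hsplit]
  by_cases hik : i < 2^k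
  · rw [if_pos hik]
    have hmin : kidx i < 2 ^ (min (i+1) k) := by
      rcases min_choice (i+1) k with h | h <;> rw [h]
      · exact kidx_lt_two_pow_succ i
      · exact (kidx_lt_iff i k).2 hik
    have := coeffK hμ hf (i := i) (k := min (i+1) k) hmin
    rw [this]
    ring
  · rw [if_neg hik]
    have hk2 : min (i+1) k = k := min_eq_right (by
      have := Nat.lt_two_pow_self (n := k)
      omega)
    rw [hk2]
    have h1 : f k = partialW μ (2^k) (f k) := by
      funext y; exact (hf.2 k k le_rfl y).symm
    have : ∫ x, f k x * kacz i x ∂μ = 0 := by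
      conv_lhs => rw [h1]
      simp_rw [kacz_eq_walsh]
      have : ∫ x, partialW μ (2^k) (f k) x * walsh (kidx i) x ∂μ
          = fhatW μ (partialW μ (2^k) (f k)) (kidx i) := rfl
      rw [this, fhatW_partialW hμ, if_neg (fun hh => hik ((kidx_lt_iff i k).1 hh))]
    rw [this]
    ring

end martingale

section decomp

variable {μ : Measure WG} (hμ : IsHaar μ) {f : ℕ → WG → ℝ} (hf : IsDyadicMartingale μ f)

lemma poly_sub {n R : ℕ} (hR : R ≤ n) (hn : 0 < n) (t : ℕ → ℝ) :
    (1/n:ℝ) * (∑ i ∈ Finset.range R, ((n - i : ℕ):ℝ) * t i) - ∑ i ∈ Finset.range R, t i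
      = -((1/n:ℝ) * ∑ i ∈ Finset.range R, (i:ℝ) * t i) := by
  rw [Finset.mul_sum, Finset.mul_sum, ← Finset.sum_sub_distrib, ← Finset.sum_neg_distrib]
  refine Finset.sum_congr rfl fun i hi => ?_
  simp only [Finset.mem_range] at hi
  have hin : i ≤ n := by omega
  have hn' : (n:ℝ) ≠ 0 := Nat.cast_ne_zero.2 (by omega)
  rw [Nat.cast_sub hin]
  field_simp
  ring

include hμ hf in
lemma Dn_closed {n m : ℕ} (h : 2^m ≤ n) (x : WG) :
    partialW μ (2^m) (sigmaKMart μ n f) x - f m x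
      = -((1/n:ℝ) * ∑ i ∈ Finset.range (2^m), (i:ℝ) * (fhatKMart μ f i * kacz i x)) := by
  rw [partialW_sigma hμ, min_eq_right h]
  conv_lhs => rw [mart_eq_kacz_poly hμ hf m x]
  exact poly_sub h (lt_of_lt_of_le (pow_pos (by norm_num) m) h) _

include hμ hf in
lemma Dn_decomp {n m₀ : ℕ} (hn : 2^m₀ < n) (m : ℕ) (x : WG) :
    partialW μ (2^m) (sigmaKMart μ n f) x - f m x
      = (partialW μ (2^m) (sigmaKMart μ n (fun m x => f m x - f (min m m₀) x)) x
          - (f m x - f (min m m₀) x))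
        + ((2^m₀ : ℝ)/n) *
          (partialW μ (2^(min m m₀)) (sigmaKMart μ (2^m₀) f) x - f (min m m₀) x) := by
  have hmin1 : min (2^m) (2^m₀) = 2^(min m m₀) := by
    rcases le_total m m₀ with h | h
    · rw [min_eq_left h, min_eq_left (Nat.pow_le_pow_right (by norm_num) h)]
    · rw [min_eq_right h, min_eq_right (Nat.pow_le_pow_right (by norm_num) h)]
  have hmin2 : min (min n (2^m)) (2^m₀) = 2^(min m m₀) := by
    rw [min_assoc, hmin1]
    exact min_eq_right (le_of_lt (lt_of_le_of_lt
      (Nat.pow_le_pow_right (by norm_num) (min_le_right m m₀)) hn))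
  have hn0 : (0:ℕ) < n := lt_of_le_of_lt (Nat.zero_le _) hn
  have hR : 2^(min m m₀) ≤ n :=
    le_trans (Nat.pow_le_pow_right (by norm_num) (min_le_right m m₀)) (le_of_lt hn)
  -- second summand closed form
  have h2 : partialW μ (2^(min m m₀)) (sigmaKMart μ (2^m₀) f) x - f (min m m₀) x
      = -((1/(2^m₀:ℝ)) * ∑ i ∈ Finset.range (2^(min m m₀)),
          (i:ℝ) * (fhatKMart μ f i * kacz i x)) := by
    have := Dn_closed hμ hf (n := 2^m₀) (m := min m m₀)
      (Nat.pow_le_pow_right (by norm_num) (min_le_right m m₀)) x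
    simpa using this
  -- difference of the two partial sums of sigma means
  have hdiff : partialW μ (2^m) (sigmaKMart μ n f) x
      - partialW μ (2^m) (sigmaKMart μ n (fun m x => f m x - f (min m m₀) x)) x
      = (1/n:ℝ) * ∑ i ∈ Finset.range (2^(min m m₀)),
          ((n - i : ℕ):ℝ) * (fhatKMart μ f i * kacz i x) := by
    rw [partialW_sigma hμ, partialW_sigma hμ, ← mul_sub, ← Finset.sum_sub_distrib]
    congr 1
    have hterm : ∀ i ∈ Finset.range (min n (2^m)),
        ((n - i : ℕ):ℝ) * (fhatKMart μ f i * kacz i x)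
          - ((n - i : ℕ):ℝ) * (fhatKMart μ (fun m x => f m x - f (min m m₀) x) i * kacz i x)
          = if i < 2^m₀ then ((n - i : ℕ):ℝ) * (fhatKMart μ f i * kacz i x) else 0 := by
      intro i _
      rw [tail_coeff hμ hf m₀ i]
      split <;> simp <;> ring
    rw [Finset.sum_congr rfl hterm, ← Finset.sum_filter, filter_range_lt, hmin2]
  -- combine
  have hfm : f (min m m₀) x = ∑ i ∈ Finset.range (2^(min m m₀)),
      fhatKMart μ f i * kacz i x := mart_eq_kacz_poly hμ hf _ x
  have key : partialW μ (2^m) (sigmaKMart μ n f) x - f m x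
      - (partialW μ (2^m) (sigmaKMart μ n (fun m x => f m x - f (min m m₀) x)) x
          - (f m x - f (min m m₀) x))
      = -((1/n:ℝ) * ∑ i ∈ Finset.range (2^(min m m₀)),
          (i:ℝ) * (fhatKMart μ f i * kacz i x)) := by
    have : partialW μ (2^m) (sigmaKMart μ n f) x - f m x
        - (partialW μ (2^m) (sigmaKMart μ n (fun m x => f m x - f (min m m₀) x)) x
            - (f m x - f (min m m₀) x))
        = (partialW μ (2^m) (sigmaKMart μ n f) x
            - partialW μ (2^m) (sigmaKMart μ n (fun m x => f m x - f (min m m₀) x)) x)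
          - f (min m m₀) x := by ring
    rw [this, hdiff, hfm]
    exact poly_sub hR hn0 _
  have hcast : ((2^m₀:ℝ)/n) * -((1/(2^m₀:ℝ)) * ∑ i ∈ Finset.range (2^(min m m₀)),
          (i:ℝ) * (fhatKMart μ f i * kacz i x))
      = -((1/n:ℝ) * ∑ i ∈ Finset.range (2^(min m m₀)),
          (i:ℝ) * (fhatKMart μ f i * kacz i x)) := by
    have h2m : (2:ℝ)^m₀ ≠ 0 := by positivity
    have hn' : (n:ℝ) ≠ 0 := Nat.cast_ne_zero.2 (by omega)
    field_simp
  rw [h2, hcast]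
  linarith [key]

end decomp

noncomputable section Elemmas

open scoped ENNReal

variable {μ : Measure WG} {p : ℝ}

/-- the p-th power functional underlying `HpNorm` -/
def Efun (μ : Measure WG) (p : ℝ) (F : ℕ → WG → ℝ) : ℝ≥0∞ :=
  ∫⁻ x, (⨆ n, (‖F n x‖₊ : ℝ≥0∞)) ^ p ∂μ

lemma HpNorm_eq (F : ℕ → WG → ℝ) : HpNorm μ p F = (Efun μ p F) ^ (1/p) := rfl

lemma Efun_eq_pow (hp : 0 < p) (F : ℕ → WG → ℝ) : Efun μ p F = HpNorm μ p F ^ p := by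
  rw [HpNorm_eq, one_div, ENNReal.rpow_inv_rpow hp.ne']

lemma aemeas_supE (hp : 0 < p) (F : ℕ → WG → ℝ) (h : ∀ m, AEStronglyMeasurable (F m) μ) :
    AEMeasurable (fun x => (⨆ m, (‖F m x‖₊ : ℝ≥0∞)) ^ p) μ :=
  AEMeasurable.pow_const (AEMeasurable.iSup fun m => (h m).nnnorm.aemeasurable.coe_nnreal_ennreal) p

lemma Efun_le_add (hp : 0 < p) (hp1 : p ≤ 1) (Z X Y : ℕ → WG → ℝ)
    (hZ : ∀ m x, (‖Z m x‖₊ : ℝ≥0∞) ≤ (‖X m x‖₊ : ℝ≥0∞) + (‖Y m x‖₊ : ℝ≥0∞))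
    (hX : ∀ m, AEStronglyMeasurable (X m) μ) :
    Efun μ p Z ≤ Efun μ p X + Efun μ p Y := by
  have hpt : ∀ x, (⨆ m, (‖Z m x‖₊ : ℝ≥0∞)) ^ p
      ≤ (⨆ m, (‖X m x‖₊ : ℝ≥0∞)) ^ p + (⨆ m, (‖Y m x‖₊ : ℝ≥0∞)) ^ p := by
    intro x
    have h1 : (⨆ m, (‖Z m x‖₊ : ℝ≥0∞)) ≤ (⨆ m, (‖X m x‖₊ : ℝ≥0∞)) + ⨆ m, (‖Y m x‖₊ : ℝ≥0∞) :=
      iSup_le fun m => le_trans (hZ m x)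
        (add_le_add (le_iSup (fun m => (‖X m x‖₊ : ℝ≥0∞)) m)
          (le_iSup (fun m => (‖Y m x‖₊ : ℝ≥0∞)) m))
    exact le_trans (ENNReal.rpow_le_rpow h1 hp.le)
      (ENNReal.rpow_add_le_add_rpow _ _ hp.le hp1)
  calc Efun μ p Z ≤ ∫⁻ x, ((⨆ m, (‖X m x‖₊ : ℝ≥0∞)) ^ p
        + (⨆ m, (‖Y m x‖₊ : ℝ≥0∞)) ^ p) ∂μ := lintegral_mono hpt
    _ = Efun μ p X + Efun μ p Y := lintegral_add_left' (aemeas_supE hp X hX) _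

lemma Efun_const_mul (hp : 0 < p) (c : ℝ) (X : ℕ → WG → ℝ) :
    Efun μ p (fun m x => c * X m x) = ((‖c‖₊ : ℝ≥0∞)) ^ p * Efun μ p X := by
  rw [Efun, Efun, ← lintegral_const_mul' _ _ (ENNReal.rpow_ne_top_of_nonneg hp.le ENNReal.coe_ne_top)]
  congr 1
  funext x
  rw [← ENNReal.mul_rpow_of_nonneg _ _ hp.le, ENNReal.mul_iSup]
  congr 2
  funext m
  rw [nnnorm_mul]
  push_cast
  ring

lemma Efun_mono_sup (hp : 0 < p) (X Y : ℕ → WG → ℝ)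
    (h : ∀ x, (⨆ m, (‖X m x‖₊ : ℝ≥0∞)) ≤ ⨆ m, (‖Y m x‖₊ : ℝ≥0∞)) :
    Efun μ p X ≤ Efun μ p Y :=
  lintegral_mono fun x => ENNReal.rpow_le_rpow (h x) hp.le

lemma Efun_comp_min (hp : 0 < p) (k : ℕ) (X : ℕ → WG → ℝ) :
    Efun μ p (fun m x => X (min m k) x) ≤ Efun μ p X :=
  Efun_mono_sup hp _ _ fun x =>
    iSup_le fun m => le_iSup (fun m => (‖X m x‖₊ : ℝ≥0∞)) (min m k)

lemma tendsto_rpow_zero {α : Type*} {l : Filter α} {q : ℝ} (hq : 0 < q) {z : α → ℝ≥0∞}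
    (h : Tendsto z l (nhds 0)) : Tendsto (fun a => z a ^ q) l (nhds 0) := by
  rw [ENNReal.tendsto_nhds_zero] at h ⊢
  intro ε hε
  by_cases hεt : ε = ⊤
  · exact Filter.Eventually.of_forall fun a => hεt ▸ le_top
  · have hpos : 0 < ε ^ (1/q) := ENNReal.rpow_pos hε hεt
    filter_upwards [h _ hpos] with a ha
    calc z a ^ q ≤ (ε ^ (1/q)) ^ q := ENNReal.rpow_le_rpow ha hq.le
      _ = ε := by rw [one_div, ENNReal.rpow_inv_rpow hq.ne']

/-- the ε/2 recursion lemma -/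
lemma rec_tendsto {u b : ℕ → ℝ≥0∞} {q : ℝ≥0∞} (hq : q < 1) (hu0 : u 0 ≠ ⊤)
    (hb : ∀ k, b k ≠ ⊤) (hrec : ∀ k, u (k+1) ≤ b k + q * u k)
    (hbt : Tendsto b atTop (nhds 0)) : Tendsto u atTop (nhds 0) := by
  have hufin : ∀ k, u k ≠ ⊤ := by
    intro k
    induction k with
    | zero => exact hu0
    | succ k ih =>
      exact ne_top_of_le_ne_top (ENNReal.add_ne_top.2 ⟨hb k,
        ENNReal.mul_ne_top (hq.trans_le le_top).ne ih⟩) (hrec k)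
  rw [ENNReal.tendsto_nhds_zero] at hbt ⊢
  intro ε hε
  by_cases hεt : ε = ⊤
  · exact Filter.Eventually.of_forall fun a => hεt ▸ le_top
  -- β := (1-q) * (ε/2)
  set σ := ε / 2 with hσ
  have hσpos : 0 < σ := ENNReal.div_pos hε.ne' (by norm_num)
  have hσt : σ ≠ ⊤ := by
    rw [hσ]
    exact (ENNReal.div_lt_top hεt (by norm_num)).ne
  set β := (1 - q) * σ with hβ
  have hβpos : 0 < β := ENNReal.mul_pos (tsub_pos_of_lt hq).ne' hσpos.ne'
  obtain ⟨K, hK⟩ := (Filter.eventually_atTop).1 (hbt β hβpos)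
  -- claim: u (K + j) ≤ q^j * u K + σ
  have claim : ∀ j, u (K + j) ≤ q ^ j * u K + σ := by
    intro j
    induction j with
    | zero => simp
    | succ j ih =>
      have h1 : u (K + (j+1)) ≤ b (K + j) + q * u (K + j) := by
        have : K + (j + 1) = (K + j) + 1 := by omega
        rw [this]
        exact hrec (K + j)
      calc u (K + (j+1)) ≤ b (K + j) + q * u (K + j) := h1
        _ ≤ β + q * (q ^ j * u K + σ) :=
          add_le_add (hK _ (by omega)) (mul_le_mul_right ih q)
        _ = q ^ (j+1) * u K + ((1 - q) * σ + q * σ) := by rw [hβ]; ring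
        _ = q ^ (j+1) * u K + σ := by
          congr 1
          rw [← add_mul, tsub_add_cancel_of_le hq.le, one_mul]
    -- done
  have hqu : Tendsto (fun j => q ^ j * u K) atTop (nhds 0) := by
    have := ENNReal.tendsto_pow_atTop_nhds_zero_of_lt_one hq
    have h2 := ENNReal.Tendsto.const_mul (a := u K) this (Or.inr (hufin K))
    simp only [mul_zero] at h2
    exact h2.congr fun j => by ring
  rw [ENNReal.tendsto_nhds_zero] at hqu
  obtain ⟨J, hJ⟩ := (Filter.eventually_atTop).1 (hqu σ hσpos)
  rw [Filter.eventually_atTop]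
  refine ⟨K + J, fun k hk => ?_⟩
  have hkK : k = K + (k - K) := by omega
  calc u k = u (K + (k - K)) := by rw [← hkK]
    _ ≤ q ^ (k - K) * u K + σ := claim _
    _ ≤ σ + σ := add_le_add (hJ _ (by omega)) le_rfl
    _ = ε := by rw [hσ]; exact ENNReal.add_halves ε

end Elemmas

section helpers

lemma coe_nnnorm_add (a b : ℝ) : (‖a + b‖₊ : ℝ≥0∞) ≤ (‖a‖₊ : ℝ≥0∞) + (‖b‖₊ : ℝ≥0∞) := by
  exact_mod_cast nnnorm_add_le a b

lemma coe_nnnorm_sub (a b : ℝ) : (‖a - b‖₊ : ℝ≥0∞) ≤ (‖a‖₊ : ℝ≥0∞) + (‖b‖₊ : ℝ≥0∞) := by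
  exact_mod_cast nnnorm_sub_le a b

lemma measurable_partialW (μ : Measure WG) (N : ℕ) (G : WG → ℝ) :
    Measurable (partialW μ N G) := by
  apply Finset.measurable_sum
  intro j _
  exact (measurable_walsh j).const_mul _

end helpers

/-- If `‖σ_n^κ f‖_{H_p} ≤ c_p n^{1/p−2} log^{2⌊1/2+p⌋}(n+1) ‖f‖_{H_p}` holds on `H_p`
and `ω_{H_p}(1/2^k, f) = o(2^{−k(1/p−2)})`, then `‖σ_n^κ f − f‖_{H_p} → 0`. -/
theorem convergence_from_modulus (μ : Measure WG) (hμ : IsHaar μ) (p : ℝ)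
    (hp1 : 0 < p) (hp2 : p < 1 / 2) (cp : ℝ)
    (hbound : ∀ g : ℕ → WG → ℝ, IsDyadicMartingale μ g → ∀ n : ℕ, 1 ≤ n →
      HpNormFn μ p (sigmaKMart μ n g) ≤
        ENNReal.ofReal
            (cp * (n : ℝ) ^ (1 / p - 2) * Real.log (n + 1) ^ (2 * ⌊(1 / 2 : ℝ) + p⌋₊)) *
          HpNorm μ p g)
    (f : ℕ → WG → ℝ) (hf : IsDyadicMartingale μ f) (hfHp : HpNorm μ p f < ∞)
    (hω : Tendsto
      (fun k : ℕ => omegaHp μ p f k / ENNReal.ofReal ((2 : ℝ) ^ (-(k : ℝ) * (1 / p - 2))))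
      atTop (nhds 0)) :
    Tendsto (fun n : ℕ => HpDist μ p (sigmaKMart μ n f) f) atTop (nhds 0) := by
  haveI := isProb hμ
  have hp2' : p ≤ 1 := by linarith
  have he : 0 < 1/p - 2 := by
    have h2 : 2 < 1/p := (lt_div_iff₀ hp1).2 (by linarith)
    linarith
  have hfl : ⌊(1/2:ℝ) + p⌋₊ = 0 := Nat.floor_eq_zero.2 (by linarith)
  have hbound'' : ∀ (g : ℕ → WG → ℝ), IsDyadicMartingale μ g → ∀ n : ℕ, 1 ≤ n →
      HpNormFn μ p (sigmaKMart μ n g)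
        ≤ ENNReal.ofReal (cp * (n:ℝ) ^ (1/p - 2)) * HpNorm μ p g := by
    intro g hg n hn
    have := hbound g hg n hn
    rw [hfl] at this
    simpa using this
  -- finiteness facts
  have hEf : Efun μ p f ≠ ⊤ := by
    rw [Efun_eq_pow hp1]
    exact (ENNReal.rpow_lt_top_of_nonneg hp1.le hfHp.ne).ne
  have homega_pow : ∀ k, Efun μ p (fun m x => f m x - f (min m k) x) = (omegaHp μ p f k)^p :=
    fun k => Efun_eq_pow hp1 _
  have hWfin : ∀ k, (omegaHp μ p f k)^p ≠ ⊤ := by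
    intro k
    rw [← homega_pow]
    have h1 : Efun μ p (fun m x => f m x - f (min m k) x)
        ≤ Efun μ p f + Efun μ p (fun m x => f (min m k) x) :=
      Efun_le_add hp1 hp2' _ _ _ (fun m x => coe_nnnorm_sub _ _)
        (fun m => (hf.1 m).aestronglyMeasurable)
    have h2 : Efun μ p (fun m x => f (min m k) x) ≤ Efun μ p f := Efun_comp_min hp1 k f
    exact ne_top_of_le_ne_top (ENNReal.add_ne_top.2 ⟨hEf, ne_top_of_le_ne_top hEf h2⟩) h1
  have homfin : ∀ k, omegaHp μ p f k ≠ ⊤ := by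
    intro k
    have : omegaHp μ p f k = (Efun μ p (fun m x => f m x - f (min m k) x)) ^ (1/p) := rfl
    rw [this]
    exact ENNReal.rpow_ne_top_of_nonneg (by positivity) (by rw [homega_pow]; exact hWfin k)
  -- the master estimate
  have master : ∀ n m₀ : ℕ, 2^m₀ < n →
      Efun μ p (fun m x => partialW μ (2^m) (sigmaKMart μ n f) x - f m x)
        ≤ ((ENNReal.ofReal (cp * (n:ℝ)^(1/p-2)))^p * (omegaHp μ p f m₀)^p
            + (omegaHp μ p f m₀)^p)
          + ((‖((2:ℝ)^m₀/(n:ℝ))‖₊ : ℝ≥0∞))^p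
            * Efun μ p (fun m x => partialW μ (2^m) (sigmaKMart μ (2^m₀) f) x - f m x) := by
    intro n m₀ hn
    have step1 : Efun μ p (fun m x => partialW μ (2^m) (sigmaKMart μ n f) x - f m x)
        ≤ Efun μ p (fun m x =>
              partialW μ (2^m) (sigmaKMart μ n (fun m x => f m x - f (min m m₀) x)) x
                - (f m x - f (min m m₀) x))
          + Efun μ p (fun m x => ((2:ℝ)^m₀/(n:ℝ)) *
              (partialW μ (2^(min m m₀)) (sigmaKMart μ (2^m₀) f) x - f (min m m₀) x)) := by
      apply Efun_le_add hp1 hp2'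
      · intro m x
        rw [Dn_decomp hμ hf hn m x]
        exact coe_nnnorm_add _ _
      · intro m
        exact ((measurable_partialW _ _ _).aestronglyMeasurable).sub
          (((hf.1 m).sub (hf.1 _)).aestronglyMeasurable)
    have step2 : Efun μ p (fun m x =>
          partialW μ (2^m) (sigmaKMart μ n (fun m x => f m x - f (min m m₀) x)) x
            - (f m x - f (min m m₀) x))
        ≤ (ENNReal.ofReal (cp * (n:ℝ)^(1/p-2)))^p * (omegaHp μ p f m₀)^p
          + (omegaHp μ p f m₀)^p := by
      have hs := Efun_le_add (μ := μ) hp1 hp2'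
        (fun m x => partialW μ (2^m) (sigmaKMart μ n (fun m x => f m x - f (min m m₀) x)) x
            - (f m x - f (min m m₀) x))
        (fun m x => partialW μ (2^m) (sigmaKMart μ n (fun m x => f m x - f (min m m₀) x)) x)
        (fun m x => f m x - f (min m m₀) x)
        (fun m x => coe_nnnorm_sub _ _)
        (fun m => (measurable_partialW _ _ _).aestronglyMeasurable)
      refine le_trans hs (add_le_add ?_ (le_of_eq (homega_pow m₀)))
      have h1 : Efun μ p (fun m x =>
            partialW μ (2^m) (sigmaKMart μ n (fun m x => f m x - f (min m m₀) x)) x)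
          = HpNormFn μ p (sigmaKMart μ n (fun m x => f m x - f (min m m₀) x)) ^ p :=
        Efun_eq_pow hp1 _
      rw [h1, ← ENNReal.mul_rpow_of_nonneg _ _ hp1.le]
      exact ENNReal.rpow_le_rpow
        (hbound'' _ (tail_martingale hμ hf m₀) n (lt_of_le_of_lt (Nat.zero_le _) hn)) hp1.le
    have step3 : Efun μ p (fun m x => ((2:ℝ)^m₀/(n:ℝ)) *
          (partialW μ (2^(min m m₀)) (sigmaKMart μ (2^m₀) f) x - f (min m m₀) x))
        ≤ ((‖((2:ℝ)^m₀/(n:ℝ))‖₊ : ℝ≥0∞))^p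
          * Efun μ p (fun m x => partialW μ (2^m) (sigmaKMart μ (2^m₀) f) x - f m x) := by
      rw [Efun_const_mul hp1]
      exact mul_le_mul_right (Efun_comp_min hp1 m₀
        (fun m x => partialW μ (2^m) (sigmaKMart μ (2^m₀) f) x - f m x)) _
    exact le_trans step1 (add_le_add step2 step3)
  -- notation
  set u : ℕ → ℝ≥0∞ := fun k =>
    Efun μ p (fun m x => partialW μ (2^m) (sigmaKMart μ (2^k) f) x - f m x) with hu
  set C : ℝ≥0∞ := ENNReal.ofReal |cp| * ENNReal.ofReal ((2:ℝ)^(1/p-2)) with hC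
  have hCfin : C ≠ ⊤ := by
    rw [hC]
    exact ENNReal.mul_ne_top ENNReal.ofReal_ne_top ENNReal.ofReal_ne_top
  set B : ℕ → ℝ≥0∞ := fun k =>
    C^p * (ENNReal.ofReal ((2:ℝ)^((k:ℝ)*(1/p-2))) * omegaHp μ p f k)^p
      + (omegaHp μ p f k)^p with hB
  -- the coefficient bound
  have hofbound : ∀ (k n : ℕ), n ≤ 2^(k+1) →
      ENNReal.ofReal (cp * (n:ℝ)^(1/p-2))
        ≤ C * ENNReal.ofReal ((2:ℝ)^((k:ℝ)*(1/p-2))) := by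
    intro k n hnk
    have h2pos : (0:ℝ) < 2 := by norm_num
    have h1 : (n:ℝ)^(1/p-2) ≤ (2:ℝ)^(1/p-2) * (2:ℝ)^((k:ℝ)*(1/p-2)) := by
      have hcast : ((n:ℝ)) ≤ ((2:ℝ))^((k:ℝ)+1) := by
        have : ((n:ℝ)) ≤ (((2^(k+1) : ℕ)):ℝ) := by exact_mod_cast hnk
        refine le_trans this (le_of_eq ?_)
        push_cast
        rw [← Real.rpow_natCast (2:ℝ) (k+1)]
        push_cast
        ring_nf
      calc (n:ℝ)^(1/p-2) ≤ ((2:ℝ)^((k:ℝ)+1))^(1/p-2) :=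
            Real.rpow_le_rpow (Nat.cast_nonneg n) hcast he.le
        _ = (2:ℝ)^(((k:ℝ)+1)*(1/p-2)) := by rw [← Real.rpow_mul h2pos.le]
        _ = (2:ℝ)^((1/p-2) + (k:ℝ)*(1/p-2)) := by ring_nf
        _ = (2:ℝ)^(1/p-2) * (2:ℝ)^((k:ℝ)*(1/p-2)) := by rw [Real.rpow_add h2pos]
    have h2 : cp * (n:ℝ)^(1/p-2)
        ≤ |cp| * ((2:ℝ)^(1/p-2) * (2:ℝ)^((k:ℝ)*(1/p-2))) := by
      calc cp * (n:ℝ)^(1/p-2) ≤ |cp| * (n:ℝ)^(1/p-2) :=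
            mul_le_mul_of_nonneg_right (le_abs_self cp) (Real.rpow_nonneg (Nat.cast_nonneg n) _)
        _ ≤ |cp| * ((2:ℝ)^(1/p-2) * (2:ℝ)^((k:ℝ)*(1/p-2))) :=
            mul_le_mul_of_nonneg_left h1 (abs_nonneg cp)
    calc ENNReal.ofReal (cp * (n:ℝ)^(1/p-2))
        ≤ ENNReal.ofReal (|cp| * ((2:ℝ)^(1/p-2) * (2:ℝ)^((k:ℝ)*(1/p-2)))) :=
          ENNReal.ofReal_le_ofReal h2
      _ = C * ENNReal.ofReal ((2:ℝ)^((k:ℝ)*(1/p-2))) := by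
          rw [ENNReal.ofReal_mul (abs_nonneg cp),
            ENNReal.ofReal_mul (Real.rpow_nonneg h2pos.le _), hC]
          ring
  -- master with B
  have master' : ∀ n k : ℕ, 2^k < n → n ≤ 2^(k+1) →
      Efun μ p (fun m x => partialW μ (2^m) (sigmaKMart μ n f) x - f m x)
        ≤ B k + ((‖((2:ℝ)^k/(n:ℝ))‖₊ : ℝ≥0∞))^p * u k := by
    intro n k h1 h2
    refine le_trans (master n k h1) (add_le_add ?_ le_rfl)
    rw [hB]
    refine add_le_add ?_ le_rfl
    have hstep : ∀ (a b w : ℝ≥0∞), a ≤ C * b → a^p * w^p ≤ C^p * (b * w)^p := by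
      intro a b w hab
      calc a^p * w^p ≤ (C*b)^p * w^p :=
            mul_le_mul_left (ENNReal.rpow_le_rpow hab hp1.le) _
        _ = C^p * (b*w)^p := by
            rw [ENNReal.mul_rpow_of_nonneg C b hp1.le,
              ENNReal.mul_rpow_of_nonneg b w hp1.le]
            ring
    exact hstep _ _ _ (hofbound k n h2)
  -- tendency of B
  have hω0 : Tendsto (fun k : ℕ =>
      ENNReal.ofReal ((2:ℝ)^((k:ℝ)*(1/p-2))) * omegaHp μ p f k) atTop (nhds 0) := by
    refine hω.congr fun k => ?_
    have hd : ENNReal.ofReal ((2:ℝ)^(-(k:ℝ)*(1/p-2)))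
        = (ENNReal.ofReal ((2:ℝ)^((k:ℝ)*(1/p-2))))⁻¹ := by
      rw [show (-(k:ℝ)*(1/p-2)) = -((k:ℝ)*(1/p-2)) by ring,
        Real.rpow_neg (by norm_num : (0:ℝ) ≤ 2),
        ENNReal.ofReal_inv_of_pos (Real.rpow_pos_of_pos (by norm_num) _)]
    rw [div_eq_mul_inv, hd, inv_inv, mul_comm]
  have homt : Tendsto (fun k : ℕ => omegaHp μ p f k) atTop (nhds 0) := by
    refine tendsto_of_tendsto_of_tendsto_of_le_of_le' tendsto_const_nhds hω0
      (Filter.Eventually.of_forall fun k => zero_le)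
      (Filter.Eventually.of_forall fun k => ?_)
    conv_lhs => rw [← one_mul (omegaHp μ p f k)]
    refine mul_le_mul_left (ENNReal.one_le_ofReal.2 ?_) _
    exact Real.one_le_rpow (by norm_num) (mul_nonneg (Nat.cast_nonneg k) he.le)
  have hBt : Tendsto B atTop (nhds 0) := by
    have t1 : Tendsto (fun k : ℕ =>
        C^p * (ENNReal.ofReal ((2:ℝ)^((k:ℝ)*(1/p-2))) * omegaHp μ p f k)^p) atTop (nhds 0) := by
      have h0 := ENNReal.Tendsto.const_mul (a := C^p) (tendsto_rpow_zero hp1 hω0)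
        (Or.inr (ENNReal.rpow_ne_top_of_nonneg hp1.le hCfin))
      rw [mul_zero] at h0
      exact h0
    have t2 : Tendsto (fun k : ℕ => (omegaHp μ p f k)^p) atTop (nhds 0) :=
      tendsto_rpow_zero hp1 homt
    have h0 := t1.add t2
    rw [add_zero] at h0
    rw [hB]
    exact h0
  have hBfin : ∀ k, B k ≠ ⊤ := by
    intro k
    rw [hB]
    refine ENNReal.add_ne_top.2 ⟨ENNReal.mul_ne_top
      (ENNReal.rpow_ne_top_of_nonneg hp1.le hCfin)
      (ENNReal.rpow_ne_top_of_nonneg hp1.le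
        (ENNReal.mul_ne_top ENNReal.ofReal_ne_top (homfin k))), hWfin k⟩
  -- recursion
  set q : ℝ≥0∞ := ((‖((2:ℝ)⁻¹)‖₊ : ℝ≥0∞))^p with hq'
  have hhalf2 : ((‖(2:ℝ)⁻¹‖₊ : ℝ≥0∞)) = 2⁻¹ := by
    rw [nnnorm_inv, ENNReal.coe_inv (by simp)]
    norm_num
  have hqlt : q < 1 := by
    rw [hq', hhalf2]
    refine ENNReal.rpow_lt_one ?_ hp1
    rw [ENNReal.inv_lt_one]
    norm_num
  have hu0 : u 0 ≠ ⊤ := by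
    have hsplit : u 0 ≤ Efun μ p (fun m x => partialW μ (2^m) (sigmaKMart μ (2^0) f) x)
        + Efun μ p f := by
      rw [hu]
      exact Efun_le_add hp1 hp2' _ _ _ (fun m x => coe_nnnorm_sub _ _)
        (fun m => (measurable_partialW _ _ _).aestronglyMeasurable)
    have h1 : Efun μ p (fun m x => partialW μ (2^m) (sigmaKMart μ (2^0) f) x)
        = HpNormFn μ p (sigmaKMart μ (2^0) f) ^ p := Efun_eq_pow hp1 _
    have h2 : HpNormFn μ p (sigmaKMart μ (2^0) f)
        ≤ ENNReal.ofReal (cp * ((2^0:ℕ):ℝ)^(1/p-2)) * HpNorm μ p f :=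
      hbound'' f hf (2^0) le_rfl
    have h3 : Efun μ p (fun m x => partialW μ (2^m) (sigmaKMart μ (2^0) f) x) ≠ ⊤ := by
      rw [h1]
      refine ENNReal.rpow_ne_top_of_nonneg hp1.le (ne_top_of_le_ne_top ?_ h2)
      exact ENNReal.mul_ne_top ENNReal.ofReal_ne_top hfHp.ne
    exact ne_top_of_le_ne_top (ENNReal.add_ne_top.2 ⟨h3, hEf⟩) hsplit
  have hrec : ∀ k, u (k+1) ≤ B k + q * u k := by
    intro k
    have h1 : (2:ℕ)^k < 2^(k+1) := by
      have : (2:ℕ)^k < 2^k * 2 := by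
        have := pow_pos (show 0 < 2 by norm_num) k
        omega
      rw [pow_succ]
      exact this
    have := master' (2^(k+1)) k h1 le_rfl
    have hval : ((2:ℝ)^k/(((2^(k+1):ℕ)):ℝ)) = (2:ℝ)⁻¹ := by
      push_cast
      rw [pow_succ]
      have : (2:ℝ)^k ≠ 0 := by positivity
      field_simp
    rw [hval] at this
    exact this
  have hut : Tendsto u atTop (nhds 0) := rec_tendsto hqlt hu0 hBfin hrec hBt
  -- general n
  have hL : Tendsto (fun n : ℕ => Nat.log 2 (n-1)) atTop atTop := by
    rw [Filter.tendsto_atTop]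
    intro M
    filter_upwards [Filter.eventually_ge_atTop (2^M + 1)] with n hn
    have h1 : 2^M ≤ n - 1 := by
      have := pow_pos (show 0 < 2 by norm_num) M
      omega
    exact (Nat.le_log_iff_pow_le (by norm_num) (by
      have := pow_pos (show 0 < 2 by norm_num) M
      omega)).2 h1
  have hφ : Tendsto (fun k => B k + u k) atTop (nhds 0) := by
    have := hBt.add hut
    simpa using this
  have hEt : Tendsto (fun n : ℕ =>
      Efun μ p (fun m x => partialW μ (2^m) (sigmaKMart μ n f) x - f m x)) atTop (nhds 0) := by
    refine tendsto_of_tendsto_of_tendsto_of_le_of_le' tendsto_const_nhds (hφ.comp hL)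
      (Filter.Eventually.of_forall fun n => zero_le) ?_
    filter_upwards [Filter.eventually_ge_atTop 2] with n hn
    set k := Nat.log 2 (n-1) with hk
    have hn1 : n - 1 ≠ 0 := by omega
    have h1 : 2^k < n := by
      have h := Nat.pow_log_le_self 2 hn1
      rw [← hk] at h
      omega
    have h2 : n ≤ 2^(k+1) := by
      have h := Nat.lt_pow_succ_log_self (show 1 < 2 by norm_num) (n-1)
      rw [← hk] at h
      omega
    refine le_trans (master' n k h1 h2) ?_
    simp only [Function.comp]
    refine add_le_add le_rfl ?_
    conv_rhs => rw [← one_mul (u k)]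
    refine mul_le_mul_left ?_ _
    refine ENNReal.rpow_le_one ?_ hp1.le
    rw [← ENNReal.coe_one, ENNReal.coe_le_coe]
    have habs : |((2:ℝ)^k/(n:ℝ))| ≤ 1 := by
      rw [abs_of_nonneg (by positivity)]
      rw [div_le_one (by positivity)]
      exact_mod_cast le_of_lt h1
    have : ‖((2:ℝ)^k/(n:ℝ))‖ ≤ 1 := by rwa [Real.norm_eq_abs]
    exact_mod_cast this
  -- conclude
  have hfinal : ∀ n : ℕ, HpDist μ p (sigmaKMart μ n f) f
      = (Efun μ p (fun m x => partialW μ (2^m) (sigmaKMart μ n f) x - f m x)) ^ (1/p) :=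
    fun n => rfl
  have := tendsto_rpow_zero (show (0:ℝ) < 1/p by positivity) hEt
  refine this.congr fun n => ?_
  rw [hfinal n]

end
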